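/- Over F = 𝔽₂: if Q = 𝔭_q(g,f) is an irreducible candidate with f(0) = 0 and Q is primitive (a root of Q generates the multiplicative group of its splitting field), then q is primitive (a root of q generates the multiplicative group of its splitting field). -/

import Mathlib

open Polynomial

/-- The homogenization `𝔭_q(g,f) = ∑ q_i f^i g^(m-i)` where `m = deg q`. -/
noncomputable def homog {F : Type*} [Field F] (q g f : Polynomial F) : Polynomial F :=
  ∑ i ∈ Finset.range (q.natDegree + 1), C (q.coeff i) * f ^ i * g ^ (q.natDegree - i)

lemma monic_of_ne_zero' {p : Polynomial (ZMod 2)} (hp : p ≠ 0) : p.Monic := by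
  have h := leadingCoeff_ne_zero.mpr hp
  have : ∀ x : ZMod 2, x ≠ 0 → x = 1 := by decide
  exact this _ h

lemma geom_nat (c n : ℕ) (hc : 1 ≤ c) :
    (∑ j ∈ Finset.range n, c ^ j) * (c - 1) = c ^ n - 1 := by
  have h1 : 1 ≤ c ^ n := Nat.one_le_pow _ _ hc
  zify [hc, h1]
  exact geom_sum_mul (c : ℤ) n

lemma pow_eq_one_iff_dvd' {T : Type*} [Field T] [Algebra (ZMod 2) T]
    (q : Polynomial (ZMod 2)) (x : T) (hx : minpoly (ZMod 2) x = q) (k : ℕ) :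
    x ^ k = 1 ↔ q ∣ (X : Polynomial (ZMod 2)) ^ k - 1 := by
  constructor
  · intro h
    rw [← hx]
    apply minpoly.dvd
    rw [map_sub, map_pow, aeval_X, map_one, h, sub_self]
  · rintro ⟨t, ht⟩
    have h0 : Polynomial.aeval x q = 0 := by rw [← hx]; exact minpoly.aeval _ _
    have h2 := congrArg (Polynomial.aeval x) ht
    rw [map_sub, map_pow, aeval_X, map_one, map_mul, h0, zero_mul] at h2
    exact sub_eq_zero.1 h2

lemma aeval_pow_two_pow {K : Type*} [Field K] [Algebra (ZMod 2) K] [CharP K 2]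
    (h : Polynomial (ZMod 2)) (x : K) (j : ℕ) :
    (Polynomial.aeval (x ^ 2 ^ j) h) = (Polynomial.aeval x h) ^ 2 ^ j := by
  have hZ : ∀ r : ZMod 2, r = 0 ∨ r = 1 := by decide
  haveI : Fact (Nat.Prime 2) := ⟨Nat.prime_two⟩
  let Φ : K →ₐ[ZMod 2] K :=
    { iterateFrobenius K 2 j with
      commutes' := fun r => by
        rcases hZ r with h | h <;> simp [h, iterateFrobenius_def] }
  have h1 : ∀ y : K, Φ y = y ^ 2 ^ j := fun y => rfl
  have := Polynomial.aeval_algHom_apply Φ x h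
  rw [h1, h1] at this
  exact this

lemma irred_dvd_X_pow (q : Polynomial (ZMod 2)) (hqm : q.Monic) (hq : Irreducible q) :
    q ∣ (X : Polynomial (ZMod 2)) ^ 2 ^ q.natDegree - X := by
  haveI := Fact.mk hq
  have hqne : q ≠ 0 := hqm.ne_zero
  let pb := AdjoinRoot.powerBasis hqne
  haveI : Module.Finite (ZMod 2) (AdjoinRoot q) := Module.Finite.of_basis pb.basis
  haveI : Finite (AdjoinRoot q) := Module.finite_of_finite (ZMod 2)
  haveI : Fintype (AdjoinRoot q) := Fintype.ofFinite _
  have hcard : Fintype.card (AdjoinRoot q) = 2 ^ q.natDegree := by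
    have h1 : Fintype.card (AdjoinRoot q) =
        Fintype.card (ZMod 2) ^ Module.finrank (ZMod 2) (AdjoinRoot q) := Module.card_eq_pow_finrank
    rw [h1, ZMod.card, pb.finrank]
    rfl
  have hroot : Polynomial.aeval (AdjoinRoot.root q) q = 0 := by
    rw [aeval_def, AdjoinRoot.algebraMap_eq]
    exact AdjoinRoot.eval₂_root q
  have hmin : q = minpoly (ZMod 2) (AdjoinRoot.root q) :=
    minpoly.eq_of_irreducible_of_monic hq hroot hqm
  have hdvd : minpoly (ZMod 2) (AdjoinRoot.root q) ∣
      (X : Polynomial (ZMod 2)) ^ 2 ^ q.natDegree - X := by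
    apply minpoly.dvd
    rw [map_sub, map_pow, aeval_X, ← hcard, FiniteField.pow_card, sub_self]
  rwa [← hmin] at hdvd

lemma card_of_splitting {T : Type*} [Field T] [Fintype T] [Algebra (ZMod 2) T]
    (r : Polynomial (ZMod 2)) (hm : r.Monic) (hr : Irreducible r)
    [Polynomial.IsSplittingField (ZMod 2) T r]
    (x : T) (hx : Polynomial.aeval x r = 0) :
    Fintype.card T = 2 ^ r.natDegree := by
  classical
  have hZ : ∀ y : ZMod 2, y = 0 ∨ y = 1 := by decide
  haveI : Fact (Nat.Prime 2) := ⟨Nat.prime_two⟩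
  haveI : CharP T 2 := charP_of_injective_algebraMap (algebraMap (ZMod 2) T).injective 2
  have hcard : Fintype.card T = 2 ^ Module.finrank (ZMod 2) T := by
    have h1 : Fintype.card T =
        Fintype.card (ZMod 2) ^ Module.finrank (ZMod 2) T := Module.card_eq_pow_finrank
    rw [h1, ZMod.card]
  set k := r.natDegree with hk
  have hk1 : 1 ≤ k := hr.natDegree_pos
  have hxmin : minpoly (ZMod 2) x = r := (minpoly.eq_of_irreducible_of_monic hr hx hm).symm
  have hlow : k ≤ Module.finrank (ZMod 2) T := by
    have h2 := minpoly.natDegree_le (A := ZMod 2) x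
    rwa [hxmin] at h2
  have hdvd := irred_dvd_X_pow r hm hr
  let S : Subalgebra (ZMod 2) T :=
  { carrier := {y : T | y ^ 2 ^ k = y}
    mul_mem' := by
      intro a b ha hb
      simp only [Set.mem_setOf_eq] at *
      rw [mul_pow, ha, hb]
    one_mem' := by simp
    add_mem' := by
      intro a b ha hb
      simp only [Set.mem_setOf_eq] at *
      rw [add_pow_char_pow, ha, hb]
    zero_mem' := by
      simp only [Set.mem_setOf_eq]
      exact zero_pow (by positivity)
    algebraMap_mem' := by
      intro y
      simp only [Set.mem_setOf_eq]
      rw [← map_pow]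
      congr 1
      rcases hZ y with h | h <;> simp [h] }
  have hle : Algebra.adjoin (ZMod 2) (r.rootSet T) ≤ S := by
    rw [Algebra.adjoin_le_iff]
    intro y hy
    have hy0 : Polynomial.aeval y r = 0 := Polynomial.aeval_eq_zero_of_mem_rootSet hy
    obtain ⟨t, ht⟩ := hdvd
    have h2 := congrArg (Polynomial.aeval y) ht
    rw [map_sub, map_pow, aeval_X, map_mul, hy0, zero_mul] at h2
    exact sub_eq_zero.1 h2
  have htop : ∀ y : T, y ^ 2 ^ k = y := by
    intro y
    have hy : y ∈ Algebra.adjoin (ZMod 2) (r.rootSet T) := by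
      rw [Polynomial.IsSplittingField.adjoin_rootSet T r]
      trivial
    exact hle hy
  set P : Polynomial T := X ^ 2 ^ k - X with hP
  have hPdeg : P.natDegree = 2 ^ k := by
    rw [hP, sub_eq_add_neg, natDegree_add_eq_left_of_degree_lt, natDegree_X_pow]
    rw [degree_neg, degree_X, degree_X_pow]
    exact_mod_cast Nat.one_lt_pow (by omega) (by omega)
  have hPne : P ≠ 0 := by
    intro h
    rw [h, natDegree_zero] at hPdeg
    have h2 : 0 < 2 ^ k := by positivity
    omega
  have hsub : (Finset.univ : Finset T).val ⊆ P.roots := by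
    intro y hy
    rw [Polynomial.mem_roots hPne]
    simp only [IsRoot, hP, eval_sub, eval_pow, eval_X]
    rw [htop y, sub_self]
  have hup := Polynomial.card_le_degree_of_subset_roots hsub
  rw [Finset.card_univ, hPdeg] at hup
  rw [hcard] at hup
  have hfin : Module.finrank (ZMod 2) T ≤ k := by
    exact (Nat.pow_le_pow_iff_right (by omega)).mp hup
  rw [hcard, Nat.le_antisymm hfin hlow]

theorem primitive_of_primitive_candidate {L K : Type*} [Field L] [Fintype L] [Field K]
    [Fintype K] [Algebra (ZMod 2) L] [Algebra (ZMod 2) K] [Algebra L K]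
    [IsScalarTower (ZMod 2) L K]
    (q f g : Polynomial (ZMod 2))
    (hqm : q.Monic) (hq : Irreducible q) (hdq : 1 ≤ q.natDegree)
    (hfg : IsCoprime f g) (hdeg : g.natDegree < f.natDegree) (hf0 : f.eval 0 = 0)
    (hQ : Irreducible (homog q g f))
    (hK : Polynomial.IsSplittingField (ZMod 2) K (homog q g f))
    (hL : Polynomial.IsSplittingField (ZMod 2) L q)
    (μ : K) (hμ : Polynomial.aeval μ (homog q g f) = 0)
    (hprim : orderOf μ = Fintype.card K - 1)
    (α : L) (hα : Polynomial.aeval α q = 0) :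
    orderOf α = Fintype.card L - 1 := by
  classical
  haveI := hK
  haveI := hL
  have hZ : ∀ y : ZMod 2, y = 0 ∨ y = 1 := by decide
  haveI : Fact (Nat.Prime 2) := ⟨Nat.prime_two⟩
  haveI : CharP K 2 := charP_of_injective_algebraMap (algebraMap (ZMod 2) K).injective 2
  set m := q.natDegree with hm
  set n := f.natDegree with hn
  have hn1 : 1 ≤ n := Nat.lt_of_le_of_lt (Nat.zero_le _) hdeg
  have hfne : f ≠ 0 := by
    intro h
    rw [hn, h, natDegree_zero] at hn1
    omega
  have hgne : g ≠ 0 := by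
    intro h
    rw [h] at hfg
    have hu := (isCoprime_zero_right).mp hfg
    have := natDegree_eq_zero_of_isUnit hu
    omega
  have hfm : f.Monic := monic_of_ne_zero' hfne
  have hg0 : g.eval 0 = 1 := by
    obtain ⟨a, b, hab⟩ := hfg
    have h1 := congrArg (Polynomial.eval 0) hab
    rw [eval_add, eval_mul, eval_mul, hf0, mul_zero, zero_add, eval_one] at h1
    rcases hZ (g.eval 0) with h | h
    · rw [h, mul_zero] at h1
      exact absurd h1 zero_ne_one
    · exact h
  -- degree and monicity of Q
  have hQtop : homog q g f =
      (∑ i ∈ Finset.range m, C (q.coeff i) * f ^ i * g ^ (m - i)) + C (q.coeff m) * f ^ m * g ^ (m - m) := by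
    rw [homog, ← hm, Finset.sum_range_succ]
  have hQtop' : homog q g f =
      (∑ i ∈ Finset.range m, C (q.coeff i) * f ^ i * g ^ (m - i)) + f ^ m := by
    rw [hQtop, Nat.sub_self, pow_zero, mul_one]
    congr 1
    rw [hm, hqm.coeff_natDegree, map_one, one_mul]
  have hRdeg : degree (∑ i ∈ Finset.range m, C (q.coeff i) * f ^ i * g ^ (m - i)) <
      ((m * n : ℕ) : WithBot ℕ) := by
    refine lt_of_le_of_lt (degree_sum_le _ _) ?_
    rw [Finset.sup_lt_iff (by exact WithBot.bot_lt_coe _)]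
    intro i hi
    rw [Finset.mem_range] at hi
    refine lt_of_le_of_lt degree_le_natDegree ?_
    rw [Nat.cast_lt]
    calc (C (q.coeff i) * f ^ i * g ^ (m - i)).natDegree
        ≤ (C (q.coeff i) * f ^ i).natDegree + (g ^ (m - i)).natDegree := natDegree_mul_le
      _ ≤ ((C (q.coeff i)).natDegree + (f ^ i).natDegree) + (g ^ (m - i)).natDegree :=
          Nat.add_le_add_right natDegree_mul_le _
      _ = i * n + (m - i) * g.natDegree := by
          rw [natDegree_C, natDegree_pow, natDegree_pow, ← hn, zero_add]
      _ < m * n := by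
          have h1 : (m - i) * g.natDegree < (m - i) * n :=
            Nat.mul_lt_mul_of_pos_left hdeg (show 0 < m - i by omega)
          have h2 : i * n + (m - i) * n = m * n := by
            rw [← Nat.add_mul]
            congr 1
            omega
          omega
  have hfmMon : (f ^ m).Monic := hfm.pow m
  have hfmdeg : (f ^ m).degree = ((m * n : ℕ) : WithBot ℕ) := by
    rw [degree_eq_natDegree hfmMon.ne_zero, natDegree_pow, ← hn]
  have hQm : (homog q g f).Monic := by
    rw [hQtop', add_comm]
    exact hfmMon.add_of_left (by rw [hfmdeg]; exact hRdeg)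
  have hQdeg : (homog q g f).natDegree = m * n := by
    rw [hQtop', add_comm,
      natDegree_add_eq_left_of_degree_lt (by rw [hfmdeg]; exact hRdeg), natDegree_pow, ← hn]
  have hcardK : Fintype.card K = 2 ^ (m * n) := by
    rw [card_of_splitting (homog q g f) hQm hQ μ hμ, hQdeg]
  -- the evaluated homogeneous identity
  have hsum : ∑ i ∈ Finset.range (m + 1),
      algebraMap (ZMod 2) K (q.coeff i) * (Polynomial.aeval μ f) ^ i *
        (Polynomial.aeval μ g) ^ (m - i) = 0 := by
    have h1 := hμ
    rw [homog] at h1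
    rw [map_sum] at h1
    simp only [map_mul, map_pow, aeval_C] at h1
    rw [← hm] at h1
    exact h1
  have hgμ : Polynomial.aeval μ g ≠ 0 := by
    intro hgz
    have hfz : Polynomial.aeval μ f = 0 := by
      have h1 := hsum
      rw [Finset.sum_range_succ, hgz, Finset.sum_eq_zero, zero_add] at h1
      · rw [Nat.sub_self, pow_zero, mul_one, hm, hqm.coeff_natDegree, map_one, one_mul] at h1
        exact pow_eq_zero_iff (by omega) |>.mp h1
      · intro i hi
        rw [Finset.mem_range] at hi
        rw [zero_pow (by omega), mul_zero]
    obtain ⟨a, b, hab⟩ := hfg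
    have h2 := congrArg (Polynomial.aeval μ) hab
    rw [map_add, map_mul, map_mul, hfz, hgz, mul_zero, mul_zero, add_zero, map_one] at h2
    exact zero_ne_one h2
  set β : K := (Polynomial.aeval μ f) * (Polynomial.aeval μ g)⁻¹ with hβdef
  have hβg : β * Polynomial.aeval μ g = Polynomial.aeval μ f := by
    rw [hβdef, mul_assoc, inv_mul_cancel₀ hgμ, mul_one]
  have hz : Polynomial.aeval μ f + β * Polynomial.aeval μ g = 0 := by
    rw [hβg, ← two_mul, CharTwo.two_eq_zero, zero_mul]
  have hβq : Polynomial.aeval β q = 0 := by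
    have key : Polynomial.aeval β q * (Polynomial.aeval μ g) ^ m = 0 := by
      rw [Polynomial.aeval_eq_sum_range, ← hm, Finset.sum_mul, ← hsum]
      apply Finset.sum_congr rfl
      intro i hi
      rw [Finset.mem_range] at hi
      rw [Algebra.smul_def, mul_assoc, mul_assoc]
      congr 1
      have hsplit : (Polynomial.aeval μ g) ^ m =
          (Polynomial.aeval μ g) ^ i * (Polynomial.aeval μ g) ^ (m - i) := by
        rw [← pow_add]
        congr 1
        omega
      rw [hsplit, ← mul_assoc, ← mul_pow, hβg]
    exact (mul_eq_zero.mp key).resolve_right (pow_ne_zero _ hgμ)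
  -- β is fixed by the 2^m Frobenius
  have hβc : β ^ 2 ^ m = β := by
    obtain ⟨t, ht⟩ := irred_dvd_X_pow q hqm hq
    have h2 := congrArg (Polynomial.aeval β) ht
    rw [map_sub, map_pow, aeval_X, map_mul, hβq, zero_mul] at h2
    exact sub_eq_zero.1 h2
  have hβcj : ∀ j : ℕ, β ^ (2 ^ m) ^ j = β := by
    intro j
    induction j with
    | zero => simp
    | succ j ih => rw [pow_succ, pow_mul, ih, hβc]
  -- the polynomial p over K and its roots
  set p : Polynomial K := f.map (algebraMap (ZMod 2) K) + C β * g.map (algebraMap (ZMod 2) K)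
    with hp
  have hmapf : (f.map (algebraMap (ZMod 2) K)).Monic := hfm.map _
  have hfmd : (f.map (algebraMap (ZMod 2) K)).natDegree = n := by
    rw [hfm.natDegree_map, ← hn]
  have hlt : degree (C β * g.map (algebraMap (ZMod 2) K)) <
      degree (f.map (algebraMap (ZMod 2) K)) := by
    refine lt_of_le_of_lt (degree_mul_le _ _) ?_
    have hdg : degree (g.map (algebraMap (ZMod 2) K)) ≤ (g.natDegree : WithBot ℕ) :=
      degree_map_le.trans degree_le_natDegree
    calc degree (C β) + degree (g.map (algebraMap (ZMod 2) K))
        ≤ 0 + (g.natDegree : WithBot ℕ) := add_le_add degree_C_le hdg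
      _ = (g.natDegree : WithBot ℕ) := zero_add _
      _ < (n : WithBot ℕ) := by exact_mod_cast hdeg
      _ = degree (f.map (algebraMap (ZMod 2) K)) := by
          rw [degree_eq_natDegree hmapf.ne_zero, hfmd]
  have hpm : p.Monic := by
    rw [hp]
    exact hmapf.add_of_left hlt
  have hpdeg : p.natDegree = n := by
    rw [hp, natDegree_add_eq_left_of_degree_lt hlt, hfmd]
  have heval : ∀ x : K, p.eval x = Polynomial.aeval x f + β * Polynomial.aeval x g := by
    intro x
    rw [hp, eval_add, eval_mul, eval_C, eval_map, eval_map, ← aeval_def, ← aeval_def]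
  have hroots : ∀ j : ℕ, p.eval (μ ^ (2 ^ m) ^ j) = 0 := by
    intro j
    rw [heval]
    have e1 : (2 ^ m : ℕ) ^ j = 2 ^ (m * j) := (pow_mul 2 m j).symm
    rw [e1, aeval_pow_two_pow f μ (m * j), aeval_pow_two_pow g μ (m * j)]
    have h4 := congrArg (fun y : K => y ^ 2 ^ (m * j)) hz
    replace h4 : (Polynomial.aeval μ f + β * Polynomial.aeval μ g) ^ 2 ^ (m * j) = 0 ^ 2 ^ (m * j) := h4
    rw [add_pow_char_pow, mul_pow, zero_pow (by positivity)] at h4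
    have hβT : β ^ 2 ^ (m * j) = β := by
      rw [← e1]
      exact hβcj j
    rw [hβT] at h4
    exact h4
  -- injectivity of the conjugate roots
  set c : ℕ := 2 ^ m with hc
  have hc2 : 2 ≤ c := by
    rw [hc]
    calc 2 = 2 ^ 1 := (pow_one 2).symm
      _ ≤ 2 ^ m := Nat.pow_le_pow_right (by omega) (by omega)
  have hcK : Fintype.card K = c ^ n := by
    rw [hcardK, hc, pow_mul]
  have hμord : orderOf μ = c ^ n - 1 := by rw [hprim, hcK]
  have hcn2 : 2 ≤ c ^ n := by
    calc 2 ≤ c := hc2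
      _ = c ^ 1 := (pow_one c).symm
      _ ≤ c ^ n := Nat.pow_le_pow_right (by omega) (by omega)
  have hμne : μ ≠ 0 := by
    intro h0
    have h1 : μ ^ orderOf μ = 1 := pow_orderOf_eq_one μ
    rw [hμord, h0, zero_pow (by omega)] at h1
    exact zero_ne_one h1
  have key : ∀ i j : ℕ, i < n → j < n → i ≤ j → μ ^ c ^ i = μ ^ c ^ j → i = j := by
    intro i j hi hj hij heq
    by_contra hne
    have hlt2 : i < j := by omega
    have hle2 : c ^ i ≤ c ^ j := Nat.pow_le_pow_right (by omega) hij
    have heq2 : μ ^ c ^ i * μ ^ (c ^ j - c ^ i) = μ ^ c ^ i * 1 := by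
      rw [mul_one, ← pow_add]
      rw [heq]
      congr 1
      omega
    have h3 : μ ^ (c ^ j - c ^ i) = 1 := mul_left_cancel₀ (pow_ne_zero _ hμne) heq2
    have h4 : orderOf μ ∣ c ^ j - c ^ i := orderOf_dvd_of_pow_eq_one h3
    rw [hμord] at h4
    have e1 : c ^ j ≤ c ^ (n - 1) := Nat.pow_le_pow_right (by omega) (by omega)
    have e2 : c ^ (n - 1) < c ^ n := Nat.pow_lt_pow_right (by omega) (by omega)
    have e3 : 1 ≤ c ^ i := Nat.one_le_pow _ _ (by omega)
    have e4 : c ^ i < c ^ j := Nat.pow_lt_pow_right (by omega) hlt2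
    have h6 : 0 < c ^ j - c ^ i := by omega
    have h7 := Nat.le_of_dvd h6 h4
    omega
  set s : Finset K := (Finset.range n).image (fun j => μ ^ c ^ j) with hs
  have hscard : s.card = n := by
    rw [hs, Finset.card_image_of_injOn, Finset.card_range]
    intro i hi j hj heq
    rw [Finset.mem_coe, Finset.mem_range] at hi hj
    rcases le_or_gt i j with h | h
    · exact key i j hi hj h heq
    · exact (key j i hj hi h.le heq.symm).symm
  have hpne : p ≠ 0 := hpm.ne_zero
  have hsroots : s.val ⊆ p.roots := by
    intro y hy
    rw [Finset.mem_val, hs, Finset.mem_image] at hy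
    obtain ⟨j, hj, rfl⟩ := hy
    rw [Polynomial.mem_roots hpne]
    exact hroots j
  have hcardroots : Multiset.card p.roots = n := by
    have h1 := Multiset.card_le_card (Finset.val_le_iff_val_subset.2 hsroots)
    have h2 := p.card_roots'
    rw [hpdeg] at h2
    have h3 : s.val.card = n := by rw [← hscard]; rfl
    omega
  have hsval : p.roots = s.val := by
    symm
    apply Multiset.eq_of_le_of_card_le (Finset.val_le_iff_val_subset.2 hsroots)
    rw [hcardroots]
    have h3 : s.val.card = n := by rw [← hscard]; rfl
    omega
  have hW : (p.roots.map fun a => X - C a).prod = p := by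
    have hdvd2 := p.prod_multiset_X_sub_C_dvd
    have hWm : ((p.roots.map fun a => X - C a).prod).Monic :=
      monic_multiset_prod_of_monic _ _ (fun a _ => monic_X_sub_C a)
    have hWd : ((p.roots.map fun a => X - C a).prod).natDegree = n := by
      rw [natDegree_multiset_prod_of_monic]
      · simp [hcardroots]
      · intro w hw
        obtain ⟨a, _, rfl⟩ := Multiset.mem_map.1 hw
        exact monic_X_sub_C a
    refine eq_of_monic_of_associated hWm hpm ?_
    refine associated_of_dvd_of_natDegree_le hdvd2 hpne ?_
    rw [hpdeg, hWd]
  have hβval : p.eval 0 = β := by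
    rw [heval 0, aeval_def, aeval_def, eval₂_at_zero, eval₂_at_zero,
      coeff_zero_eq_eval_zero, coeff_zero_eq_eval_zero, hf0, hg0, map_zero, map_one,
      mul_one, zero_add]
  set e : ℕ := ∑ j ∈ Finset.range n, c ^ j with he
  have hprodval : p.eval 0 = μ ^ e := by
    conv_lhs => rw [← hW]
    rw [eval_multiset_prod, hsval, Multiset.map_map]
    have hmapid : s.val.map ((fun x => Polynomial.eval 0 x) ∘ (fun a => X - C a)) =
        s.val.map id := by
      apply Multiset.map_congr rfl
      intro a _
      simp [CharTwo.neg_eq]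
    rw [hmapid, Multiset.map_id]
    have h5 : s.val.prod = ∏ x ∈ s, x := by
      rw [Finset.prod_eq_multiset_prod, Multiset.map_id']
    rw [h5, hs, Finset.prod_image]
    · rw [Finset.prod_pow_eq_pow_sum, he]
    · intro i hi j hj heq
      rw [Finset.mem_coe, Finset.mem_range] at hi hj
      rcases le_or_gt i j with h | h
      · exact key i j hi hj h heq
      · exact (key j i hj hi h.le heq.symm).symm
  have hβμ : β = μ ^ e := by rw [← hβval, hprodval]
  have hepos : 0 < e := by
    rw [he]
    calc 0 < c ^ 0 := by positivity
      _ ≤ ∑ j ∈ Finset.range n, c ^ j :=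
        Finset.single_le_sum (fun i _ => Nat.zero_le _) (Finset.mem_range.mpr (by omega))
  have hgeom := geom_nat c n (by omega)
  rw [← he] at hgeom
  have hordβ : orderOf β = c - 1 := by
    rw [hβμ, orderOf_pow' (x := μ) (by omega : e ≠ 0), hμord]
    have hdvd3 : e ∣ c ^ n - 1 := ⟨c - 1, hgeom.symm⟩
    rw [Nat.gcd_eq_right hdvd3, ← hgeom, Nat.mul_div_cancel_left _ hepos]
  have hαmin : minpoly (ZMod 2) α = q := (minpoly.eq_of_irreducible_of_monic hq hα hqm).symm
  have hβmin : minpoly (ZMod 2) β = q := (minpoly.eq_of_irreducible_of_monic hq hβq hqm).symm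
  have hordα : orderOf α = orderOf β := by
    rw [orderOf_eq_orderOf_iff]
    intro k
    rw [pow_eq_one_iff_dvd' q α hαmin k, pow_eq_one_iff_dvd' q β hβmin k]
  have hcardL : Fintype.card L = 2 ^ m := card_of_splitting q hqm hq α hα
  rw [hcardL, hordα, hordβ, hc]
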